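/- Grothendieck's compactness criterion: Let X be a Banach space over ℝ or ℂ and K ⊆ X. Then K is relatively compact (i.e., its closure is compact) if and only if there exists a sequence (xₙ)ₙ in X with ‖xₙ‖ → 0 such that K ⊆ { ∑ₙ αₙ xₙ : (αₙ) a scalar sequence with ∑ₙ |αₙ| ≤ 1 } (each such series converges absolutely since (xₙ) is bounded). -/

import Mathlib

noncomputable section

open scoped ENNReal NNReal

/-- The conjugate exponent `p'` of `p : ℝ≥0∞`, characterized by `1/p + 1/p' = 1`
(with the conventions `1' = ∞` and `∞' = 1`). -/
def conjExp (p : ℝ≥0∞) : ℝ≥0∞ := (1 - 1/p)⁻¹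

theorem one_le_conjExp (p : ℝ≥0∞) : 1 ≤ conjExp p := by
  rw [conjExp]
  rw [ENNReal.one_le_inv]
  exact tsub_le_self

instance (p : ℝ≥0∞) : Fact (1 ≤ conjExp p) := ⟨one_le_conjExp p⟩

/-- The `ℓ_p`-norm `(∑ₙ ‖y n‖^p)^(1/p)` of a `p`-summable sequence `y`. -/
def lpNorm {X : Type*} [NormedAddCommGroup X] (p : ℝ≥0∞) (y : ℕ → X)
    (hy : Memℓp y p) : ℝ :=
  ‖(⟨y, hy⟩ : lp (fun _ : ℕ => X) p)‖

/-- The `p`-convex hull of a sequence `x` in `X`, taken with respect to the exponent `q`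
(in the applications below, `q` is the conjugate exponent of `p`):
the set of all sums `∑ₙ αₙ • xₙ` with `(αₙ) ∈ ℓ_q`, `‖(αₙ)‖_q ≤ 1`. -/
def pCo (𝕜 : Type*) [RCLike 𝕜] {X : Type*} [NormedAddCommGroup X] [NormedSpace 𝕜 X]
    (q : ℝ≥0∞) (x : ℕ → X) : Set X :=
  {v | ∃ α : lp (fun _ : ℕ => 𝕜) q, ‖α‖ ≤ 1 ∧ HasSum (fun n => α n • x n) v}

/-- A set `K ⊆ X` is relatively `p`-compact if it is contained in the `p`-convex hull of a
`p`-summable sequence of `X`. -/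
def RelPCompact (𝕜 : Type*) [RCLike 𝕜] {X : Type*} [NormedAddCommGroup X]
    [NormedSpace 𝕜 X] (p : ℝ≥0∞) (K : Set X) : Prop :=
  ∃ x : ℕ → X, Memℓp x p ∧ K ⊆ pCo 𝕜 (conjExp p) x

/-- A bounded linear map is `p`-compact if the image of the closed unit ball is contained in
the `p`-convex hull of a `p`-summable sequence of the target space. -/
def IsPCompact (𝕜 : Type*) [RCLike 𝕜] {X Y : Type*}
    [SeminormedAddCommGroup X] [NormedSpace 𝕜 X]
    [NormedAddCommGroup Y] [NormedSpace 𝕜 Y] (p : ℝ≥0∞) (T : X →L[𝕜] Y) : Prop :=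
  ∃ y : ℕ → Y, Memℓp y p ∧ T '' Metric.closedBall 0 1 ⊆ pCo 𝕜 (conjExp p) y

/-- The `p`-compact norm `κ_p(T) = inf { ‖(yₙ)‖_p : T(B_X) ⊆ p-co((yₙ)) }`. -/
def kappa (𝕜 : Type*) [RCLike 𝕜] {X Y : Type*}
    [SeminormedAddCommGroup X] [NormedSpace 𝕜 X]
    [NormedAddCommGroup Y] [NormedSpace 𝕜 Y] (p : ℝ≥0∞) (T : X →L[𝕜] Y) : ℝ :=
  sInf {c : ℝ | ∃ (y : ℕ → Y) (hy : Memℓp y p),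
    T '' Metric.closedBall 0 1 ⊆ pCo 𝕜 (conjExp p) y ∧ c = lpNorm p y hy}

/-- `C` is an upper bound for the weak `ℓ_q`-norm of the sequence `(x'ₙ)` of functionals,
i.e. `‖(x'ₙ(x))ₙ‖_q ≤ C‖x‖` for every `x` (equivalently,
`sup_{‖x‖ ≤ 1} ‖(x'ₙ(x))ₙ‖_q ≤ C`). -/
def WeakLpBound (𝕜 : Type*) [RCLike 𝕜] {X : Type*} [SeminormedAddCommGroup X]
    [NormedSpace 𝕜 X] (q : ℝ≥0∞) (x' : ℕ → (X →L[𝕜] 𝕜)) (C : ℝ) : Prop :=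
  ∀ x : X, ∃ h : Memℓp (fun n => x' n x) q, lpNorm q (fun n => x' n x) h ≤ C * ‖x‖

/-- A bounded linear map `T : X → Y` is right `p`-nuclear if `T x = ∑ₙ x'ₙ(x) yₙ` for some
weakly `p'`-summable sequence `(x'ₙ)` in `X'` and some `(yₙ)` with `∑ₙ ‖yₙ‖^p < ∞`. -/
def IsRightPNuclear (𝕜 : Type*) [RCLike 𝕜] {X Y : Type*}
    [SeminormedAddCommGroup X] [NormedSpace 𝕜 X]
    [NormedAddCommGroup Y] [NormedSpace 𝕜 Y] (p : ℝ≥0∞) (T : X →L[𝕜] Y) : Prop :=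
  ∃ (x' : ℕ → (X →L[𝕜] 𝕜)) (y : ℕ → Y) (C : ℝ), 0 ≤ C ∧
    WeakLpBound 𝕜 (conjExp p) x' C ∧ Memℓp y p ∧
    ∀ x : X, HasSum (fun n => x' n x • y n) (T x)

/-- The right `p`-nuclear norm
`ν^p(T) = inf ‖(x'ₙ)‖^w_{p'} ⬝ (∑ₙ ‖yₙ‖^p)^{1/p}` over all representations of `T`. -/
def nuP (𝕜 : Type*) [RCLike 𝕜] {X Y : Type*}
    [SeminormedAddCommGroup X] [NormedSpace 𝕜 X]
    [NormedAddCommGroup Y] [NormedSpace 𝕜 Y] (p : ℝ≥0∞) (T : X →L[𝕜] Y) : ℝ :=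
  sInf {c : ℝ | ∃ (x' : ℕ → (X →L[𝕜] 𝕜)) (y : ℕ → Y) (C : ℝ) (hy : Memℓp y p), 0 ≤ C ∧
    WeakLpBound 𝕜 (conjExp p) x' C ∧
    (∀ x : X, HasSum (fun n => x' n x • y n) (T x)) ∧
    c = C * lpNorm p y hy}

section GCCAux
open Metric Filter Finset

lemma gcc_rev {𝕜 X : Type*} [RCLike 𝕜] [NormedAddCommGroup X] [NormedSpace 𝕜 X]
    [CompleteSpace X] (K : Set X) (x : ℕ → X)
    (hx : Tendsto (fun n => ‖x n‖) atTop (nhds 0))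
    (hK : K ⊆ {v : X | ∃ α : ℕ → 𝕜, Summable (fun n => ‖α n‖) ∧ (∑' n, ‖α n‖) ≤ 1 ∧
      HasSum (fun n => α n • x n) v}) : IsCompact (closure K) := by
  set S := {v : X | ∃ α : ℕ → 𝕜, Summable (fun n => ‖α n‖) ∧ (∑' n, ‖α n‖) ≤ 1 ∧
      HasSum (fun n => α n • x n) v} with hS
  have hTB : TotallyBounded S := by
    rw [Metric.totallyBounded_iff]
    intro ε hε
    have h4 : (0:ℝ) < ε/4 := by linarith
    obtain ⟨N, hN⟩ := (hx.eventually_lt_const h4).exists_forall_of_atTop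
    -- compact set of head sums
    have hTcont : Continuous (fun β : Fin N → 𝕜 => ∑ i, β i • x (i : ℕ)) :=
      continuous_finset_sum _ fun i _ => (continuous_apply i).smul continuous_const
    have hBc : IsCompact {β : Fin N → 𝕜 | ∑ i, ‖β i‖ ≤ 1} := by
      apply isCompact_of_isClosed_isBounded
      · exact isClosed_le (continuous_finset_sum _ fun i _ => (continuous_apply i).norm)
          continuous_const
      · apply (Metric.isBounded_closedBall (x := (0 : Fin N → 𝕜)) (r := 1)).subset
        intro β hβ
        simp only [Metric.mem_closedBall]
        rw [dist_pi_le_iff zero_le_one]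
        intro i
        rw [Pi.zero_apply, dist_zero_right]
        exact le_trans (Finset.single_le_sum (fun j _ => norm_nonneg (β j)) (mem_univ i)) hβ
    have hC0 : IsCompact ((fun β : Fin N → 𝕜 => ∑ i, β i • x (i : ℕ)) ''
        {β : Fin N → 𝕜 | ∑ i, ‖β i‖ ≤ 1}) := hBc.image hTcont
    obtain ⟨t, htf, hts⟩ := Metric.totallyBounded_iff.mp hC0.totallyBounded (ε/2) (by linarith)
    refine ⟨t, htf, ?_⟩
    intro v hv
    obtain ⟨α, hα, hα1, hsum⟩ := hv
    have hsummf : Summable (fun n => α n • x n) := hsum.summable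
    set w := ∑ i ∈ range N, α i • x i with hw
    have hwmem : w ∈ (fun β : Fin N → 𝕜 => ∑ i, β i • x (i : ℕ)) ''
        {β : Fin N → 𝕜 | ∑ i, ‖β i‖ ≤ 1} := by
      refine ⟨fun i => α i, ?_, ?_⟩
      · have : ∑ i : Fin N, ‖α (i:ℕ)‖ = ∑ i ∈ range N, ‖α i‖ :=
          Fin.sum_univ_eq_sum_range (fun i => ‖α i‖) N
        rw [Set.mem_setOf_eq, this]
        exact le_trans (Summable.sum_le_tsum (range N) (fun n _ => norm_nonneg _) hα) hα1
      · exact Fin.sum_univ_eq_sum_range (fun i => α i • x i) N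
    have htails : Summable (fun i => ‖α (i + N) • x (i + N)‖) := by
      refine Summable.of_nonneg_of_le (fun i => norm_nonneg _) (fun i => ?_)
        (((summable_nat_add_iff N).mpr hα).mul_left (ε/4))
      rw [norm_smul, mul_comm]
      exact mul_le_mul_of_nonneg_right (le_of_lt (hN (i + N) (Nat.le_add_left N i)))
        (norm_nonneg _)
    have hdiff : ‖v - w‖ ≤ ε/4 := by
      have hvw : v - w = ∑' i, α (i + N) • x (i + N) := by
        have := Summable.sum_add_tsum_nat_add (f := fun n => α n • x n) N hsummf
        rw [hsum.tsum_eq] at this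
        rw [← this, hw]; abel
      rw [hvw]
      calc ‖∑' i, α (i + N) • x (i + N)‖ ≤ ∑' i, ‖α (i + N) • x (i + N)‖ :=
            norm_tsum_le_tsum_norm htails
        _ ≤ ∑' i, (ε/4) * ‖α (i + N)‖ := by
            apply Summable.tsum_le_tsum _ htails (((summable_nat_add_iff N).mpr hα).mul_left _)
            intro i
            rw [norm_smul, mul_comm]
            exact mul_le_mul_of_nonneg_right (le_of_lt (hN (i + N) (Nat.le_add_left N i)))
              (norm_nonneg _)
        _ = (ε/4) * ∑' i, ‖α (i + N)‖ := tsum_mul_left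
        _ ≤ (ε/4) * 1 := by
            apply mul_le_mul_of_nonneg_left _ (le_of_lt h4)
            have hdecomp := Summable.sum_add_tsum_nat_add (f := fun n => ‖α n‖) N hα
            have hhead : 0 ≤ ∑ i ∈ range N, ‖α i‖ :=
              Finset.sum_nonneg fun i _ => norm_nonneg _
            linarith [hα1]
        _ = ε/4 := mul_one _
    obtain ⟨y, hy, hwy⟩ := Set.mem_iUnion₂.mp (hts hwmem)
    apply Set.mem_iUnion₂.mpr
    refine ⟨y, hy, ?_⟩
    rw [Metric.mem_ball] at hwy ⊢
    calc dist v y ≤ dist v w + dist w y := dist_triangle v w y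
      _ ≤ ε/4 + dist w y := by rw [dist_eq_norm]; linarith
      _ < ε/4 + ε/2 := by linarith
      _ < ε := by linarith
  have : TotallyBounded (closure K) :=
    (hTB.closure).subset (closure_mono hK)
  exact TotallyBounded.isCompact_of_isClosed this isClosed_closure

lemma gcc_fwd {𝕜 X : Type*} [RCLike 𝕜] [NormedAddCommGroup X] [NormedSpace 𝕜 X]
    [CompleteSpace X] (K : Set X) (hK : IsCompact (closure K)) :
    ∃ x : ℕ → X, Tendsto (fun n => ‖x n‖) atTop (nhds 0) ∧
      K ⊆ {v : X | ∃ α : ℕ → 𝕜, Summable (fun n => ‖α n‖) ∧ (∑' n, ‖α n‖) ≤ 1 ∧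
        HasSum (fun n => α n • x n) v} := by
  classical
  set δ : ℕ → ℝ := fun k => (4:ℝ)⁻¹ ^ k with hδ
  have hδpos : ∀ k, 0 < δ k := fun k => pow_pos (by norm_num) k
  have hcov : ∀ k : ℕ, ∃ t : Set X, t.Finite ∧ closure K ⊆ ⋃ y ∈ t, ball y (δ k) :=
    fun k => Metric.totallyBounded_iff.mp hK.totallyBounded (δ k) (hδpos k)
  choose A hAfin hAcov using hcov
  have hnorm2 : ∀ m : ℕ, ‖((2:𝕜)^m)‖ = (2:ℝ)^m := by
    intro m; rw [norm_pow, RCLike.norm_ofNat]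
  -- opaque lists of scaled differences
  obtain ⟨L, hLb, hL0, hLs⟩ : ∃ L : ℕ → List X,
      (∀ k j, ‖(L (k+1)).getD j (0:X)‖ ≤ 8 * (2:ℝ)⁻¹ ^ k) ∧
      (∀ y ∈ A 0, ((2:𝕜)^(0+1)) • (y - 0) ∈ L 0) ∧
      (∀ k, ∀ y ∈ A (k+1), ∀ z ∈ A k, ‖y - z‖ ≤ δ k + δ (k+1) →
        ((2:𝕜)^(k+1+1)) • (y - z) ∈ L (k+1)) := by
    refine ⟨fun k => match k with
      | 0 => (hAfin 0).toFinset.toList.map fun y => ((2:𝕜)^(0+1)) • (y - 0)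
      | (k+1) => ((((hAfin (k+1)).toFinset.toList.product ((hAfin k).toFinset.toList)).filter
            (fun p : X × X => decide (‖p.1 - p.2‖ ≤ δ k + δ (k+1))))).map
            fun p => ((2:𝕜)^(k+1+1)) • (p.1 - p.2), ?_, ?_, ?_⟩
    · intro k j
      by_cases hj : j < (List.map (fun p : X × X => ((2:𝕜)^(k+1+1)) • (p.1 - p.2))
          ((((hAfin (k+1)).toFinset.toList.product ((hAfin k).toFinset.toList)).filter
            (fun p : X × X => decide (‖p.1 - p.2‖ ≤ δ k + δ (k+1)))))).length
      · rw [List.getD_eq_getElem _ _ hj]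
        have hmem := List.getElem_mem hj
        obtain ⟨p, hp, hpe⟩ := List.mem_map.mp hmem
        have hple : ‖p.1 - p.2‖ ≤ δ k + δ (k+1) := by
          have := (List.mem_filter.mp hp).2
          simpa using this
        rw [← hpe, norm_smul, hnorm2]
        have hδle : δ k + δ (k+1) ≤ 2 * δ k := by
          have : δ (k+1) ≤ δ k := by
            simp only [hδ]
            exact pow_le_pow_of_le_one (by norm_num) (by norm_num) (Nat.le_succ k)
          linarith
        calc (2:ℝ)^(k+1+1) * ‖p.1 - p.2‖ ≤ (2:ℝ)^(k+1+1) * (2 * δ k) := by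
              apply mul_le_mul_of_nonneg_left (hple.trans hδle) (by positivity)
          _ = 8 * (2:ℝ)⁻¹ ^ k := by
              simp only [hδ]
              rw [show ((4:ℝ)⁻¹) = (2:ℝ)⁻¹ * (2:ℝ)⁻¹ by norm_num, mul_pow]
              rw [pow_succ, pow_succ]
              field_simp
              rw [mul_right_comm, ← mul_pow]; norm_num
      · rw [List.getD_eq_default _ _ (le_of_not_gt hj), norm_zero]
        positivity
    · intro y hy
      exact List.mem_map_of_mem (Finset.mem_toList.mpr ((hAfin 0).mem_toFinset.mpr hy))
    · intro k y hy z hz hyz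
      apply List.mem_map_of_mem (a := (y, z))
      rw [List.mem_filter]
      refine ⟨List.pair_mem_product.mpr ⟨Finset.mem_toList.mpr ((hAfin (k+1)).mem_toFinset.mpr hy),
        Finset.mem_toList.mpr ((hAfin k).mem_toFinset.mpr hz)⟩, by
          rw [decide_eq_true_eq]; exact hyz⟩
  set x' : ℕ × ℕ → X := fun q => (L q.1).getD q.2 0 with hx'
  set e : ℕ ≃ ℕ × ℕ := (Denumerable.eqv (ℕ × ℕ)).symm with he
  refine ⟨fun n => x' (e n), ?_, ?_⟩
  · -- tendsto to zero
    rw [← Nat.cofinite_eq_atTop]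
    have hcof : Tendsto (fun q : ℕ × ℕ => ‖x' q‖) cofinite (nhds 0) := by
      rw [Metric.tendsto_nhds]
      intro ε hε
      rw [Filter.eventually_cofinite]
      obtain ⟨K₀, hK₀⟩ := exists_pow_lt_of_lt_one (show (0:ℝ) < ε/8 by linarith)
        (show (2:ℝ)⁻¹ < 1 by norm_num)
      apply Set.Finite.subset (Finset.range (K₀+1) ×ˢ
        Finset.range ((Finset.range (K₀+1)).sup (fun k => (L k).length))).finite_toSet
      intro q hq
      simp only [Set.mem_setOf_eq, not_lt, Real.dist_0_eq_abs,
        abs_of_nonneg (norm_nonneg _)] at hq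
      have hqnorm : ε ≤ ‖x' q‖ := hq
      have hk : q.1 < K₀ + 1 := by
        by_contra hkc
        push_neg at hkc
        obtain ⟨k, hqk⟩ : ∃ k, q.1 = k + 1 := ⟨q.1 - 1, by omega⟩
        have hkK : K₀ ≤ k := by omega
        have h1 : ‖x' (k+1, q.2)‖ ≤ 8 * (2:ℝ)⁻¹ ^ k := hLb k q.2
        have h2 : (2:ℝ)⁻¹ ^ k ≤ (2:ℝ)⁻¹ ^ K₀ :=
          pow_le_pow_of_le_one (by norm_num) (by norm_num) hkK
        have h3 : ‖x' (k+1, q.2)‖ < ε := by nlinarith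
        have hq1 : x' q = x' (k+1, q.2) := by
          rw [show q = (k+1, q.2) from Prod.ext hqk rfl]
        rw [hq1] at hqnorm; linarith
      have hj : q.2 < (L q.1).length := by
        by_contra hjc
        push_neg at hjc
        have : x' q = 0 := List.getD_eq_default _ _ hjc
        rw [this, norm_zero] at hqnorm; linarith
      rw [Finset.coe_product]
      exact ⟨Finset.mem_coe.mpr (Finset.mem_range.mpr hk), Finset.mem_coe.mpr
        (Finset.mem_range.mpr (lt_of_lt_of_le hj
          (Finset.le_sup (f := fun k => (L k).length) (Finset.mem_range.mpr hk))))⟩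
    exact hcof.comp (e.injective.tendsto_cofinite)
  · -- inclusion of K
    intro v hv
    have hvC : v ∈ closure K := subset_closure hv
    have hsel : ∀ k, ∃ y, y ∈ A k ∧ dist v y < δ k := by
      intro k
      have := hAcov k hvC
      rw [Set.mem_iUnion₂] at this
      obtain ⟨y, hy, hmem⟩ := this
      exact ⟨y, hy, Metric.mem_ball.mp hmem⟩
    choose a haA haclose using hsel
    set prev : ℕ → X := fun k => match k with | 0 => 0 | (k+1) => a k with hprev
    have hdistbound : ∀ k, ‖a (k+1) - a k‖ ≤ δ k + δ (k+1) := by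
      intro k
      rw [← dist_eq_norm]
      calc dist (a (k+1)) (a k) ≤ dist (a (k+1)) v + dist v (a k) := dist_triangle _ _ _
        _ ≤ δ (k+1) + δ k := by
            have h1 := haclose (k+1); have h2 := haclose k
            rw [dist_comm] at h1; linarith
        _ = δ k + δ (k+1) := add_comm _ _
    have hmemL : ∀ k, ((2:𝕜)^(k+1)) • (a k - prev k) ∈ L k := by
      intro k
      match k with
      | 0 => exact hL0 (a 0) (haA 0)
      | (k+1) => exact hLs k (a (k+1)) (haA (k+1)) (a k) (haA k) (hdistbound k)
    have hJ : ∀ k, ∃ j, ∃ h : j < (L k).length, (L k)[j] = ((2:𝕜)^(k+1)) • (a k - prev k) :=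
      fun k => List.mem_iff_getElem.mp (hmemL k)
    choose J hJlt hJeq using hJ
    set ι : ℕ → ℕ × ℕ := fun k => (k, J k) with hι
    have hιinj : Function.Injective ι := fun k l h => congrArg Prod.fst h
    set α' : ℕ × ℕ → 𝕜 := fun q => if q.2 = J q.1 then ((2:𝕜)⁻¹)^(q.1+1) else 0 with hα'
    have hvanish : ∀ q ∉ Set.range ι, α' q = 0 := by
      intro q hq
      have : q.2 ≠ J q.1 := fun h => hq ⟨q.1, Prod.ext rfl h.symm⟩
      simp only [hα', if_neg this]
    have hαι : ∀ k, α' (ι k) = ((2:𝕜)⁻¹)^(k+1) := fun k => if_pos rfl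
    have hnormαι : ∀ k, ‖α' (ι k)‖ = ((2:ℝ)⁻¹)^(k+1) := by
      intro k
      rw [hαι, norm_pow, norm_inv, RCLike.norm_ofNat]
    have hns : HasSum (fun q : ℕ × ℕ => ‖α' q‖) 1 := by
      rw [← Function.Injective.hasSum_iff hιinj (fun q hq => by rw [hvanish q hq, norm_zero])]
      have hgeo : HasSum (fun k : ℕ => ((2:ℝ)⁻¹)^(k+1)) 1 := by
        have h := hasSum_geometric_of_lt_one (show (0:ℝ) ≤ 2⁻¹ by norm_num)
          (show (2:ℝ)⁻¹ < 1 by norm_num)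
        have h2 := h.mul_left (2:ℝ)⁻¹
        have h3 : (2:ℝ)⁻¹ * (1 - 2⁻¹)⁻¹ = 1 := by norm_num
        rw [h3] at h2
        simpa only [pow_succ'] using h2
      convert hgeo using 1
      funext k
      exact hnormαι k
    set t : ℕ → X := fun k => a k - prev k with ht
    have hsummt : Summable t := by
      apply Summable.of_norm_bounded (g := fun k => match k with
        | 0 => ‖a 0‖ | (k+1) => δ k + δ (k+1))
      · rw [← summable_nat_add_iff 1]
        have heq : (fun k : ℕ => δ k + δ (k+1)) = fun k => ((4:ℝ)⁻¹)^k + 4⁻¹ * ((4:ℝ)⁻¹)^k := by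
          funext k; simp only [hδ]; rw [pow_succ]; ring
        show Summable (fun k : ℕ => δ k + δ (k+1))
        rw [heq]
        exact ((summable_geometric_of_lt_one (by norm_num) (by norm_num)).add
          ((summable_geometric_of_lt_one (by norm_num) (by norm_num)).mul_left _))
      · intro k
        match k with
        | 0 => show ‖a 0 - prev 0‖ ≤ ‖a 0‖; simp [hprev]
        | (k+1) => exact hdistbound k
    have hts : HasSum t (∑' k, t k) := hsummt.hasSum
    have hpartial : ∀ n, ∑ i ∈ range (n+1), t i = a n := by
      intro n
      induction n with
      | zero => simp [ht, hprev]
      | succ n ih =>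
        rw [Finset.sum_range_succ, ih]
        show a n + (a (n+1) - a n) = a (n+1)
        abel
    have h1 : Tendsto (fun n => a n) atTop (nhds (∑' k, t k)) := by
      have := hts.tendsto_sum_nat.comp (tendsto_add_atTop_nat 1)
      simpa only [Function.comp_def, hpartial] using this
    have h2 : Tendsto (fun n => a n) atTop (nhds v) := by
      rw [tendsto_iff_dist_tendsto_zero]
      apply squeeze_zero (fun n => dist_nonneg) (fun n => ?_)
        (tendsto_pow_atTop_nhds_zero_of_lt_one (show (0:ℝ) ≤ 4⁻¹ by norm_num) (by norm_num))
      rw [dist_comm]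
      exact le_of_lt (haclose n)
    have htsv : HasSum t v := by
      rwa [tendsto_nhds_unique h1 h2] at hts
    have hfι : ((fun q : ℕ × ℕ => α' q • x' q) ∘ ι) = t := by
      funext k
      have hx'ι : x' (ι k) = ((2:𝕜)^(k+1)) • (a k - prev k) := by
        rw [hx', hι]
        show (L k).getD (J k) 0 = _
        rw [List.getD_eq_getElem _ _ (hJlt k)]
        exact hJeq k
      have hcoef : ((2:𝕜)⁻¹)^(k+1) * (2:𝕜)^(k+1) = 1 := by
        rw [← mul_pow]
        norm_num
      show α' (ι k) • x' (ι k) = t k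
      rw [hαι, hx'ι, smul_smul, hcoef, one_smul]
    refine ⟨fun n => α' (e n), ?_, ?_, ?_⟩
    · exact ((Equiv.hasSum_iff e).mpr hns).summable
    · exact le_of_eq ((Equiv.hasSum_iff e (f := fun q => ‖α' q‖)).mpr hns).tsum_eq
    · have hf : HasSum (fun q : ℕ × ℕ => α' q • x' q) v := by
        rw [← Function.Injective.hasSum_iff hιinj
          (fun q hq => by rw [hvanish q hq, zero_smul])]
        rw [hfι]
        exact htsv
      have hfinal := (Equiv.hasSum_iff e (f := fun q : ℕ × ℕ => α' q • x' q)).mpr hf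
      simpa [Function.comp_def] using hfinal

end GCCAux

/-- **Grothendieck's compactness criterion.** A subset `K` of a Banach space `X` is relatively
compact if and only if there is a null sequence `(xₙ)` in `X` such that `K` is contained in
`{ ∑ₙ αₙ xₙ : ∑ₙ |αₙ| ≤ 1 }`. -/
theorem grothendieck_compactness_criterion {𝕜 X : Type*} [RCLike 𝕜]
    [NormedAddCommGroup X] [NormedSpace 𝕜 X] [CompleteSpace X] (K : Set X) :
    IsCompact (closure K) ↔
      ∃ x : ℕ → X, Filter.Tendsto (fun n => ‖x n‖) Filter.atTop (nhds 0) ∧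
        K ⊆ {v : X | ∃ α : ℕ → 𝕜, Summable (fun n => ‖α n‖) ∧ (∑' n, ‖α n‖) ≤ 1 ∧
          HasSum (fun n => α n • x n) v} := by
  constructor
  · intro h
    exact gcc_fwd (𝕜 := 𝕜) K h
  · rintro ⟨x, hx, hKx⟩
    exact gcc_rev K x hx hKx
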